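/- With B̄, c̄, and D as defined, suppose D ≠ 0. Then B̄ is invertible and the dual solution after the pivot is c̄ᵀ B̄⁻¹ = ȳᵀ + ((f − 1)·f / D) · (l-th row of A_β⁻¹); that is, the new dual basic solution equals ȳ plus the multiple (f − 1)·f / D of the l-th row of A_β⁻¹. -/

import Mathlib

set_option synthInstance.maxHeartbeats 1000000
set_option maxHeartbeats 1000000


open Matrix Finset

/-- If `D ≠ 0`, then `B̄` is invertible and
`c̄ᵀ B̄⁻¹ = ȳᵀ + ((f − 1)·f / D) · (l-th row of A_β⁻¹)`. -/
theorem stmt_16 (m : ℕ) (hm : 0 < m)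
    (A : Matrix (Fin m) (Fin m) ℝ) (hA : IsUnit A.det)
    (hAint : ∀ k j, ∃ z : ℤ, A k j = (z : ℝ))
    (c : Fin m → ℝ) (hcint : ∀ k, ∃ z : ℤ, c k = (z : ℝ))
    (ybar : Fin m → ℝ) (hybar : ybar = Matrix.vecMul c A⁻¹)
    (i : Fin m) (hfrac : ¬ ∃ z : ℤ, ybar i = (z : ℝ))
    (f : ℝ) (hf : f = ybar i - (⌊ybar i⌋ : ℝ))
    (r : Fin m → ℝ) (l : Fin m)
    (v : Fin m → ℝ) (hv : v = (A.mulVec r - (f - 1) • (Pi.single i 1 : Fin m → ℝ)))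
    (B : Matrix (Fin m) (Fin m) ℝ) (hB : B = A.updateCol l v)
    (cbar : Fin m → ℝ)
    (hcbar : cbar = Function.update c l (c ⬝ᵥ r - (f - 1) * (⌊ybar i⌋ : ℝ)))
    (D : ℝ) (hD : D = r l - (f - 1) * A⁻¹ l i) (hD0 : D ≠ 0) :
    IsUnit B.det ∧
      Matrix.vecMul cbar B⁻¹ = fun j => ybar j + ((f - 1) * f / D) * A⁻¹ l j := by
  have hinvA : A⁻¹ * A = 1 := Matrix.nonsing_inv_mul A hA
  -- A⁻¹ *ᵥ v
  have hu : A⁻¹ *ᵥ v = fun k => r k - (f - 1) * A⁻¹ k i := by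
    rw [hv, Matrix.mulVec_sub, Matrix.mulVec_smul, Matrix.mulVec_mulVec, hinvA,
      Matrix.one_mulVec, Matrix.mulVec_single]
    ext k
    simp [mul_comm]
  -- determinant
  have hcrv : Matrix.cramer A v = A.det • (A⁻¹ *ᵥ v) := by
    have h1 := Matrix.mulVec_cramer A v
    calc Matrix.cramer A v = A⁻¹ *ᵥ (A *ᵥ Matrix.cramer A v) := by
          rw [Matrix.mulVec_mulVec, hinvA, Matrix.one_mulVec]
      _ = A⁻¹ *ᵥ (A.det • v) := by rw [h1]
      _ = A.det • (A⁻¹ *ᵥ v) := Matrix.mulVec_smul _ _ _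
  have hdetB : B.det = A.det * D := by
    rw [hB, ← Matrix.cramer_apply, hcrv, hu]
    simp [hD]
  have hBunit : IsUnit B.det := by
    rw [hdetB]
    exact hA.mul (isUnit_iff_ne_zero.mpr hD0)
  refine ⟨hBunit, ?_⟩
  set s : ℝ := (f - 1) * f / D with hs
  set y' : Fin m → ℝ := ybar + s • (A⁻¹ l : Fin m → ℝ) with hy'
  have hyA : y' ᵥ* A = c + s • (Pi.single l 1 : Fin m → ℝ) := by
    rw [hy', Matrix.add_vecMul, Matrix.smul_vecMul, hybar, Matrix.vecMul_vecMul, hinvA,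
      Matrix.vecMul_one]
    congr 1
    have : A⁻¹ l ᵥ* A = (A⁻¹ * A) l := by
      ext j; simp [Matrix.vecMul, Matrix.mul_apply, dotProduct]
    rw [this, hinvA]
    ext j
    simp [Matrix.one_apply, Pi.single_apply, eq_comm]
  have hybari : ybar i = Matrix.vecMul c A⁻¹ i := by rw [hybar]
  have hkey : y' ᵥ* B = cbar := by
    ext j
    rcases eq_or_ne j l with h | hj
    · rw [h]
      have h1 : (y' ᵥ* B) l = y' ⬝ᵥ v := by
        simp [hB, Matrix.vecMul, dotProduct, Matrix.updateCol_apply]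
      have hyi : y' i = ybar i + s * A⁻¹ l i := by simp [hy']
      have hsD : s * D = (f - 1) * f := by rw [hs, div_mul_cancel₀ _ hD0]
      have hfb : (⌊ybar i⌋ : ℝ) = ybar i - f := by rw [hf]; ring
      rw [h1, hv, dotProduct_sub, Matrix.dotProduct_mulVec, hyA, dotProduct_smul,
        dotProduct_single, add_dotProduct, smul_dotProduct, single_dotProduct,
        hyi, hcbar, hfb]
      simp only [Function.update_self, smul_eq_mul]
      linear_combination hsD - s * hD
    · have h1 : (y' ᵥ* B) j = (y' ᵥ* A) j := by
        simp [hB, Matrix.vecMul, dotProduct, Matrix.updateCol_apply, hj]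
      rw [h1, hyA, hcbar]
      simp [Function.update_of_ne hj, Pi.single_eq_of_ne hj]
  have : Matrix.vecMul cbar B⁻¹ = y' := by
    rw [← hkey, Matrix.vecMul_vecMul, Matrix.mul_nonsing_inv B hBunit, Matrix.vecMul_one]
  rw [this]
  ext j
  simp [hy', hs]
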